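/- Let ∇ be a metric connection with totally skew-symmetric torsion T on a Riemannian manifold (M,g), so ∇_X Y = ∇^g_X Y + (1/2)T(X,Y,−). Then for any exterior form ω, the ∇-codifferential δ^∇ω = −Σᵢ eᵢ ⌟ ∇_{eᵢ}ω and the Riemannian codifferential δ^g ω are related by δ^∇ω = δ^g ω − (1/2) Σ_{i,j} (eᵢ ⌟ eⱼ ⌟ T) ∧ (eᵢ ⌟ eⱼ ⌟ ω), where (eᵢ) is a local orthonormal frame. In particular δ^∇T = δ^g T. -/

import Mathlib

/-!  Pointwise model for exterior forms on a Riemannian manifold `(M,g,T)`: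
a `q`-form is given by its (alternating) coefficient array
`ω : (Fin q → Fin n) → ℝ` with respect to a local orthonormal frame `(eᵢ)`,
and the Riemannian covariant derivatives `∇^g_{eᵢ} ω` at the point are
arbitrary arrays `Dg i`.  The metric connection with skew-symmetric torsion `T`
is `∇_X Y = ∇^g_X Y + (1/2) T(X,Y,−)`, so that
`(∇_{eᵢ}ω)(Y₁,…) = (∇^g_{eᵢ}ω)(Y₁,…) − Σ_l ω(Y₁,…,(1/2)T(eᵢ,Y_l,·),…)`.
The codifferential of a connection `∇'` is `δ^{∇'}ω = −Σᵢ eᵢ ⌟ ∇'_{eᵢ}ω`. -/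

/-- `Fin.cons`, specialised to index tuples. -/
def consV {n p : ℕ} (i : Fin n) (v : Fin (p + 1) → Fin n) : Fin (p + 2) → Fin n :=
  Fin.cons i v

/-- Wedge product of a 1-form `α` with an `r`-form `β` (as alternating arrays):
`(α ∧ β)(Y₀,…,Y_r) = Σ_l (−1)^l α(Y_l) β(Y₀,…,Ŷ_l,…,Y_r)`. -/
def wedge1 {n r : ℕ} (α : Fin n → ℝ) (β : (Fin r → Fin n) → ℝ) :
    (Fin (r + 1) → Fin n) → ℝ :=
  fun v => ∑ l : Fin (r + 1), (-1 : ℝ) ^ (l : ℕ) * α (v l) * β (v ∘ l.succAbove)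

/-- Pulling the `(l+1)`-st entry of an updated cons-tuple to the front costs a
sign `(-1)^(l+1)` for an alternating form. -/
lemma key_aux (n p : ℕ)
    (ω : (Fin (p + 2) → Fin n) → ℝ)
    (haltω : ∀ (v : Fin (p + 2) → Fin n) (σ : Equiv.Perm (Fin (p + 2))),
        ω (v ∘ σ) = ((Equiv.Perm.sign σ : ℤ) : ℝ) * ω v)
    (v : Fin (p+1) → Fin n) (i m : Fin n) (l : Fin (p+1)) :
      ω (Fin.cons i (Function.update v l m)) =
        (-1:ℝ)^((l:ℕ)+1) * ω (Fin.cons m (Fin.cons i (v ∘ l.succAbove))) := by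
  have h := haltω (Fin.cons m (Fin.cons i (v ∘ l.succAbove))) (Fin.cycleRange l.succ)
  have hfun : (Fin.cons m (Fin.cons i (v ∘ l.succAbove)) ∘ (Fin.cycleRange l.succ) :
      Fin (p+2) → Fin n) = Fin.cons i (Function.update v l m) := by
    funext t
    induction t using Fin.cases with
    | zero =>
      have h0 : (0 : Fin (p+2)) < l.succ := l.succ_pos
      simp [Function.comp, Fin.cycleRange_of_lt h0]
    | succ k =>
      rcases lt_trichotomy k l with hk | hk | hk
      · have hlt : k.succ < l.succ := Fin.succ_lt_succ_iff.mpr hk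
        have hkp : (k : ℕ) < p := lt_of_lt_of_le hk (Nat.lt_succ_iff.mp l.isLt)
        rw [Function.comp_apply, Fin.cycleRange_of_lt hlt, Fin.cons_succ,
          Function.update_of_ne (Fin.ne_of_lt hk)]
        have h1 : k.succ + 1 = (⟨(k:ℕ)+1, by omega⟩ : Fin (p+1)).succ := by
          apply Fin.ext
          rw [Fin.val_add_one_of_lt (by rw [Fin.lt_def]; simp; omega)]
          simp only [Fin.val_succ]
        rw [h1, Fin.cons_succ,
          show (⟨(k:ℕ)+1, by omega⟩ : Fin (p+1)) = (⟨(k:ℕ), hkp⟩ : Fin p).succ from rfl,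
          Fin.cons_succ, Function.comp_apply,
          Fin.succAbove_of_castSucc_lt _ _
            (lt_of_eq_of_lt (Fin.ext rfl : (⟨(k:ℕ), hkp⟩ : Fin p).castSucc = k) hk)]
        exact congrArg v (Fin.ext rfl)
      · subst hk
        rw [Function.comp_apply, Fin.cycleRange_self, Fin.cons_zero, Fin.cons_succ,
          Function.update_self]
      · have hgt : l.succ < k.succ := Fin.succ_lt_succ_iff.mpr hk
        have hk0 : (0:ℕ) < (k : ℕ) := lt_of_le_of_lt (Nat.zero_le _) hk
        rw [Function.comp_apply, Fin.cycleRange_of_gt hgt, Fin.cons_succ, Fin.cons_succ,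
          Function.update_of_ne (Fin.ne_of_gt hk),
          show k = (⟨(k:ℕ)-1, by omega⟩ : Fin p).succ from Fin.ext (by simp; omega),
          Fin.cons_succ, Function.comp_apply,
          Fin.succAbove_of_lt_succ _ _ (by rw [Fin.lt_def]; simp; omega)]
  rw [hfun, Fin.sign_cycleRange] at h
  rw [h]
  norm_num [Fin.val_succ]

/-- For a metric connection `∇` with totally skew-symmetric
torsion `T` (so `∇ = ∇^g + (1/2)T(·,·,−)`), the codifferentials satisfy
`δ^∇ω = δ^g ω − (1/2) Σ_{i,j} (eᵢ ⌟ eⱼ ⌟ T) ∧ (eᵢ ⌟ eⱼ ⌟ ω)` for every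
exterior form `ω`; in particular `δ^∇ T = δ^g T` for the torsion form itself
(the correction term vanishes for `ω = T`). -/
theorem codifferential_formula_skew_torsion (n p : ℕ)
    (T : Fin n → Fin n → Fin n → ℝ)
    (haltT : ∀ i j k : Fin n, T i j k = - T j i k ∧ T i j k = - T i k j)
    (ω : (Fin (p + 2) → Fin n) → ℝ)
    (haltω : ∀ (v : Fin (p + 2) → Fin n) (σ : Equiv.Perm (Fin (p + 2))),
        ω (v ∘ σ) = ((Equiv.Perm.sign σ : ℤ) : ℝ) * ω v)
    (Dg : Fin n → ((Fin (p + 2) → Fin n) → ℝ)) :   -- the values ∇^g_{eᵢ} ω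
    -- δ^∇ω = δ^gω − (1/2) Σ_{i,j} (eᵢ⌟eⱼ⌟T) ∧ (eᵢ⌟eⱼ⌟ω) :
    (∀ v : Fin (p + 1) → Fin n,
      -(∑ i : Fin n,
          (Dg i (consV i v)
            - ∑ l : Fin (p + 2), ∑ m : Fin n,
                (1 / 2 : ℝ) * T i ((consV i v) l) m
                  * ω (Function.update (consV i v) l m)))
        = -(∑ i : Fin n, Dg i (consV i v))
          - (1 / 2 : ℝ) * ∑ i : Fin n, ∑ j : Fin n,
              wedge1 (fun k => T j i k)
                (fun w : Fin p → Fin n => ω (Fin.cons j (Fin.cons i w))) v)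
    -- in particular, for the torsion form itself the correction term vanishes,
    -- i.e. δ^∇ T = δ^g T :
    ∧ (∀ v : Fin 2 → Fin n,
        ∑ i : Fin n, ∑ j : Fin n,
          wedge1 (fun k => T j i k)
            (fun w : Fin 1 → Fin n => T j i (w 0)) v = 0) := by
  have hTdiag : ∀ i m : Fin n, T i i m = 0 := fun i m => by
    have := (haltT i i m).1; linarith
  have hTrot : ∀ i j k : Fin n, T j i k = T i k j := fun i j k => by
    have h1 := (haltT j i k).1
    have h2 := (haltT i j k).2
    linarith
  constructor
  · intro v
    have hL : ∀ i : Fin n,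
        ∑ l : Fin (p+2), ∑ m : Fin n,
          (1/2:ℝ) * T i (consV i v l) m * ω (Function.update (consV i v) l m)
        = ∑ l : Fin (p+1), ∑ m : Fin n,
            -((1/2:ℝ) * ((-1:ℝ)^(l:ℕ) * T i (v l) m
                * ω (Fin.cons m (Fin.cons i (v ∘ l.succAbove))))) := by
      intro i
      rw [Fin.sum_univ_succ]
      have h0 : ∑ m : Fin n,
          (1/2:ℝ) * T i (consV i v 0) m * ω (Function.update (consV i v) 0 m) = 0 := by
        apply Finset.sum_eq_zero; intro m _
        simp [consV, hTdiag]
      rw [h0, zero_add]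
      refine Finset.sum_congr rfl fun l _ => Finset.sum_congr rfl fun m _ => ?_
      have hc : consV i v l.succ = v l := by simp [consV]
      have hu : Fin.cons i (Function.update v l m)
          = Function.update (consV i v) l.succ m := by
        simp only [consV]
        exact @Fin.cons_update (p+1) (fun _ => Fin n) i v l m
      rw [hc, ← hu, key_aux n p ω haltω v i m l]
      ring_nf
    have hW : ∀ i j : Fin n,
        wedge1 (fun k => T j i k) (fun w : Fin p → Fin n => ω (Fin.cons j (Fin.cons i w))) v
        = ∑ l : Fin (p+1), (-1:ℝ)^(l:ℕ) * T i (v l) j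
            * ω (Fin.cons j (Fin.cons i (v ∘ l.succAbove))) := by
      intro i j
      unfold wedge1
      refine Finset.sum_congr rfl fun l _ => ?_
      simp only
      rw [hTrot i j (v l)]
    have hS : ∀ i : Fin n,
        ∑ l : Fin (p+2), ∑ m : Fin n,
          (1/2:ℝ) * T i (consV i v l) m * ω (Function.update (consV i v) l m)
        = -((1/2:ℝ) * ∑ j : Fin n,
            wedge1 (fun k => T j i k)
              (fun w : Fin p → Fin n => ω (Fin.cons j (Fin.cons i w))) v) := by
      intro i
      rw [hL i]
      have hWs : ∑ j : Fin n,
          wedge1 (fun k => T j i k)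
            (fun w : Fin p → Fin n => ω (Fin.cons j (Fin.cons i w))) v
          = ∑ j : Fin n, ∑ l : Fin (p+1), (-1:ℝ)^(l:ℕ) * T i (v l) j
              * ω (Fin.cons j (Fin.cons i (v ∘ l.succAbove))) :=
        Finset.sum_congr rfl fun j _ => hW i j
      rw [hWs, Finset.sum_comm, Finset.mul_sum, ← Finset.sum_neg_distrib]
      refine Finset.sum_congr rfl fun l _ => ?_
      rw [Finset.mul_sum, ← Finset.sum_neg_distrib]
    have hSS : ∑ i : Fin n, ∑ l : Fin (p+2), ∑ m : Fin n,
          (1/2:ℝ) * T i (consV i v l) m * ω (Function.update (consV i v) l m)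
        = ∑ i : Fin n, -((1/2:ℝ) * ∑ j : Fin n,
            wedge1 (fun k => T j i k)
              (fun w : Fin p → Fin n => ω (Fin.cons j (Fin.cons i w))) v) :=
      Finset.sum_congr rfl fun i _ => hS i
    rw [Finset.sum_sub_distrib, neg_sub, hSS, Finset.sum_neg_distrib, ← Finset.mul_sum]
    ring
  · intro v
    refine Finset.sum_eq_zero fun i _ => Finset.sum_eq_zero fun j _ => ?_
    unfold wedge1
    rw [Fin.sum_univ_two]
    have h0 : ((0:Fin 2).succAbove 0 : Fin 2) = 1 := by decide
    have h1 : ((1:Fin 2).succAbove 0 : Fin 2) = 0 := by decide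
    simp only [Function.comp_apply, h0, h1, Fin.val_zero, Fin.val_one, pow_zero, pow_one]
    ring
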